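/- Let H ∈ (1/2,1), T > 0, and let ψ ∈ L²([0,T],ℝ). Then H(2H-1) ∫₀^T ∫₀^T |ψ(s)||ψ(t)| |s-t|^{2H-2} ds dt ≤ 2H T^{2H-1} ∫₀^T |ψ(s)|² ds. -/

import Mathlib

open MeasureTheory Set
open scoped ENNReal

private lemma meas_absrpow (r : ℝ) : Measurable (fun x : ℝ => |x| ^ r) := by
  apply measurable_of_continuousOn_compl_singleton (0 : ℝ)
  apply ContinuousOn.rpow_const continuous_abs.continuousOn
  intro x hx
  exact Or.inl (abs_ne_zero.2 hx)

private lemma kern_ii {r u T : ℝ} (hr1 : (-1:ℝ) < r) (hu0 : 0 ≤ u) (huT : u ≤ T) :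
    IntervalIntegrable (fun v => |u - v| ^ r) volume 0 u ∧
    IntervalIntegrable (fun v => |u - v| ^ r) volume u T := by
  constructor
  · have base : IntervalIntegrable (fun x : ℝ => x ^ r) volume 0 u :=
      intervalIntegral.intervalIntegrable_rpow' hr1
    have h1 : IntervalIntegrable (fun v => (u - v) ^ r) volume 0 u := by
      simpa using (base.comp_sub_left u).symm
    rw [intervalIntegrable_iff] at h1 ⊢
    refine h1.congr_fun (fun v hv => ?_) measurableSet_uIoc
    rw [uIoc_of_le hu0] at hv
    rw [abs_of_nonneg (by linarith [hv.2] : (0:ℝ) ≤ u - v)]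
  · have base : IntervalIntegrable (fun x : ℝ => x ^ r) volume 0 (T - u) :=
      intervalIntegral.intervalIntegrable_rpow' hr1
    have h2 : IntervalIntegrable (fun v => (v - u) ^ r) volume u T := by
      simpa using base.comp_sub_right u
    rw [intervalIntegrable_iff] at h2 ⊢
    refine h2.congr_fun (fun v hv => ?_) measurableSet_uIoc
    rw [uIoc_of_le huT] at hv
    rw [abs_sub_comm, abs_of_nonneg (by linarith [hv.1] : (0:ℝ) ≤ v - u)]

private lemma kern_integrable {r u T : ℝ} (hr1 : (-1:ℝ) < r) (hu0 : 0 ≤ u) (huT : u ≤ T) :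
    IntervalIntegrable (fun v => |u - v| ^ r) volume 0 T :=
  (kern_ii hr1 hu0 huT).1.trans (kern_ii hr1 hu0 huT).2

private lemma kern_val {r u T : ℝ} (hr1 : (-1:ℝ) < r) (hrne : r + 1 ≠ 0)
    (hu0 : 0 ≤ u) (huT : u ≤ T) :
    (∫ v in (0:ℝ)..T, |u - v| ^ r) = (u ^ (r+1) + (T - u) ^ (r+1)) / (r+1) := by
  rw [← intervalIntegral.integral_add_adjacent_intervals
      (kern_ii hr1 hu0 huT).1 (kern_ii hr1 hu0 huT).2]
  have e1 : (∫ v in (0:ℝ)..u, |u - v| ^ r) = u ^ (r+1) / (r+1) := by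
    rw [intervalIntegral.integral_congr (g := fun v => (u - v) ^ r) ?_]
    · rw [intervalIntegral.integral_comp_sub_left (fun x : ℝ => x ^ r) u]
      simp only [sub_self, sub_zero]
      rw [integral_rpow (Or.inl hr1), Real.zero_rpow hrne, sub_zero]
    · intro v hv
      rw [uIcc_of_le hu0] at hv
      simp only
      rw [abs_of_nonneg (by linarith [hv.2] : (0:ℝ) ≤ u - v)]
  have e2 : (∫ v in u..T, |u - v| ^ r) = (T - u) ^ (r+1) / (r+1) := by
    rw [intervalIntegral.integral_congr (g := fun v => (v - u) ^ r) ?_]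
    · rw [intervalIntegral.integral_comp_sub_right (fun x : ℝ => x ^ r) u]
      simp only [sub_self]
      rw [integral_rpow (Or.inl hr1), Real.zero_rpow hrne, sub_zero]
    · intro v hv
      rw [uIcc_of_le huT] at hv
      simp only
      rw [abs_sub_comm, abs_of_nonneg (by linarith [hv.1] : (0:ℝ) ≤ v - u)]
  rw [e1, e2]
  ring

private lemma kern_lint {r u T : ℝ} (hr1 : (-1:ℝ) < r) (hrp : 0 < r + 1)
    (hu0 : 0 ≤ u) (huT : u ≤ T) :
    ∫⁻ v in Set.Ioc 0 T, ENNReal.ofReal (|u - v| ^ r) ≤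
      ENNReal.ofReal (2 * T ^ (r+1) / (r+1)) := by
  have hT0 : (0:ℝ) ≤ T := le_trans hu0 huT
  have hInt : IntegrableOn (fun v => |u - v| ^ r) (Set.Ioc 0 T) := by
    rw [← intervalIntegrable_iff_integrableOn_Ioc_of_le hT0]
    exact kern_integrable hr1 hu0 huT
  rw [← ofReal_integral_eq_lintegral_ofReal hInt
    (ae_of_all _ (fun v => Real.rpow_nonneg (abs_nonneg _) r))]
  apply ENNReal.ofReal_le_ofReal
  have : (∫ v in Set.Ioc 0 T, |u - v| ^ r) = (u ^ (r+1) + (T - u) ^ (r+1)) / (r+1) := by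
    rw [← intervalIntegral.integral_of_le hT0]
    exact kern_val hr1 hrp.ne' hu0 huT
  rw [this]
  have h1 : u ^ (r+1) ≤ T ^ (r+1) := Real.rpow_le_rpow hu0 huT hrp.le
  have h2 : (T - u) ^ (r+1) ≤ T ^ (r+1) :=
    Real.rpow_le_rpow (by linarith) (by linarith) hrp.le
  exact div_le_div_of_nonneg_right (by linarith) hrp.le

/-- For `H ∈ (1/2,1)`, `T > 0` and `ψ ∈ L²([0,T])`:
`H(2H-1) ∫₀^T ∫₀^T |ψ(s)||ψ(t)||s-t|^{2H-2} ds dt ≤ 2H T^{2H-1} ∫₀^T |ψ(s)|² ds`. -/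
theorem l2_embeds_in_absH (H T : ℝ) (hH : H ∈ Set.Ioo (1/2 : ℝ) 1) (hT : 0 < T)
    (ψ : ℝ → ℝ) (hmeas : Measurable ψ)
    (hL2 : IntegrableOn (fun s => (ψ s)^2) (Set.Icc 0 T)) :
    H * (2*H - 1) *
        ∫ t in (0:ℝ)..T, ∫ s in (0:ℝ)..T, |ψ s| * |ψ t| * |s - t| ^ (2*H - 2) ≤
      2 * H * T ^ (2*H - 1) * ∫ s in (0:ℝ)..T, (ψ s)^2 := by
  obtain ⟨hH1, hH2⟩ := hH
  have hH0 : (0:ℝ) < H := by linarith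
  have hr1 : (-1:ℝ) < 2*H - 2 := by linarith
  have hrp : (0:ℝ) < (2*H - 2) + 1 := by linarith
  set r : ℝ := 2*H - 2 with hrdef
  set C : ℝ := 2 * T ^ (r+1) / (r+1) with hCdef
  have hC0 : 0 ≤ C := by
    apply div_nonneg _ hrp.le
    have := Real.rpow_nonneg hT.le (r+1)
    linarith
  -- rewrite interval integrals as set integrals over Ioc 0 T
  simp only [intervalIntegral.integral_of_le hT.le]
  set I : ℝ := ∫ s in Set.Ioc 0 T, (ψ s)^2 with hIdef
  have hI : IntegrableOn (fun s => (ψ s)^2) (Set.Ioc 0 T) :=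
    hL2.mono_set Set.Ioc_subset_Icc_self
  have hI0 : 0 ≤ I :=
    setIntegral_nonneg measurableSet_Ioc (fun s _ => sq_nonneg _)
  -- measurability facts
  have mψ : Measurable fun s => |ψ s| := hmeas.abs
  have hKm : Measurable fun p : ℝ × ℝ => |p.1 - p.2| ^ r :=
    (meas_absrpow r).comp (measurable_fst.sub measurable_snd)
  have hgm : Measurable (Function.uncurry fun t s => |ψ s| * |ψ t| * |s - t| ^ r) := by
    apply Measurable.mul
    · exact (mψ.comp measurable_snd).mul (mψ.comp measurable_fst)
    · exact hKm.comp (measurable_snd.prodMk measurable_fst)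
  have hFm : Measurable (Function.uncurry fun t s =>
      ENNReal.ofReal (|ψ s| * |ψ t| * |s - t| ^ r)) :=
    ENNReal.measurable_ofReal.comp hgm
  have hg0 : ∀ t s, 0 ≤ |ψ s| * |ψ t| * |s - t| ^ r := fun t s =>
    mul_nonneg (mul_nonneg (abs_nonneg _) (abs_nonneg _)) (Real.rpow_nonneg (abs_nonneg _) _)
  set μT := volume.restrict (Set.Ioc (0:ℝ) T) with hμT
  -- T1/T2 integrand measurability
  have hT1m : Measurable (Function.uncurry fun t s =>
      ENNReal.ofReal ((ψ s)^2 * |s - t| ^ r)) := by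
    apply ENNReal.measurable_ofReal.comp
    exact ((hmeas.comp measurable_snd).pow_const 2).mul
      (hKm.comp (measurable_snd.prodMk measurable_fst))
  have hT2m : Measurable (Function.uncurry fun t s =>
      ENNReal.ofReal ((ψ t)^2 * |s - t| ^ r)) := by
    apply ENNReal.measurable_ofReal.comp
    exact ((hmeas.comp measurable_fst).pow_const 2).mul
      (hKm.comp (measurable_snd.prodMk measurable_fst))
  -- the key bound in ENNReal
  have hψlint : ∫⁻ t, ENNReal.ofReal ((ψ t)^2) ∂μT = ENNReal.ofReal I := by
    rw [hIdef, ofReal_integral_eq_lintegral_ofReal hI (ae_of_all _ (fun s => sq_nonneg _))]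
  have kern_bound : ∀ u ∈ Set.Ioc (0:ℝ) T,
      ∫⁻ v, ENNReal.ofReal (|u - v| ^ r) ∂μT ≤ ENNReal.ofReal C := by
    intro u hu
    exact kern_lint hr1 hrp hu.1.le hu.2
  -- Term 2 bound
  have hTerm2 : ∫⁻ t, ∫⁻ s, ENNReal.ofReal ((ψ t)^2 * |s - t| ^ r) ∂μT ∂μT ≤
      ENNReal.ofReal I * ENNReal.ofReal C := by
    have step : ∀ t ∈ Set.Ioc (0:ℝ) T,
        ∫⁻ s, ENNReal.ofReal ((ψ t)^2 * |s - t| ^ r) ∂μT ≤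
          ENNReal.ofReal ((ψ t)^2) * ENNReal.ofReal C := by
      intro t ht
      have : ∀ s, ENNReal.ofReal ((ψ t)^2 * |s - t| ^ r) =
          ENNReal.ofReal ((ψ t)^2) * ENNReal.ofReal (|t - s| ^ r) := by
        intro s
        rw [← ENNReal.ofReal_mul (sq_nonneg _), abs_sub_comm]
      simp only [this]
      have hm : Measurable fun s : ℝ => ENNReal.ofReal (|t - s| ^ r) :=
        ENNReal.measurable_ofReal.comp ((meas_absrpow r).comp (measurable_const.sub measurable_id))
      rw [lintegral_const_mul _ hm]
      exact mul_le_mul_right (kern_bound t ht) _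
    calc ∫⁻ t, ∫⁻ s, ENNReal.ofReal ((ψ t)^2 * |s - t| ^ r) ∂μT ∂μT
        ≤ ∫⁻ t, ENNReal.ofReal ((ψ t)^2) * ENNReal.ofReal C ∂μT := by
          apply lintegral_mono_ae
          filter_upwards [ae_restrict_mem measurableSet_Ioc] with t ht
          exact step t ht
      _ = (∫⁻ t, ENNReal.ofReal ((ψ t)^2) ∂μT) * ENNReal.ofReal C := by
          have hm2 : Measurable fun u : ℝ => ENNReal.ofReal ((ψ u)^2) :=
            ENNReal.measurable_ofReal.comp (hmeas.pow_const 2)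
          rw [lintegral_mul_const _ hm2]
      _ = ENNReal.ofReal I * ENNReal.ofReal C := by rw [hψlint]
  -- Term 1 bound (via Tonelli swap)
  have hTerm1 : ∫⁻ t, ∫⁻ s, ENNReal.ofReal ((ψ s)^2 * |s - t| ^ r) ∂μT ∂μT ≤
      ENNReal.ofReal I * ENNReal.ofReal C := by
    rw [lintegral_lintegral_swap hT1m.aemeasurable]
    have step : ∀ s ∈ Set.Ioc (0:ℝ) T,
        ∫⁻ t, ENNReal.ofReal ((ψ s)^2 * |s - t| ^ r) ∂μT ≤
          ENNReal.ofReal ((ψ s)^2) * ENNReal.ofReal C := by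
      intro s hs
      have : ∀ t, ENNReal.ofReal ((ψ s)^2 * |s - t| ^ r) =
          ENNReal.ofReal ((ψ s)^2) * ENNReal.ofReal (|s - t| ^ r) := by
        intro t
        rw [← ENNReal.ofReal_mul (sq_nonneg _)]
      simp only [this]
      have hm : Measurable fun t : ℝ => ENNReal.ofReal (|s - t| ^ r) :=
        ENNReal.measurable_ofReal.comp ((meas_absrpow r).comp (measurable_const.sub measurable_id))
      rw [lintegral_const_mul _ hm]
      exact mul_le_mul_right (kern_bound s hs) _
    calc ∫⁻ s, ∫⁻ t, ENNReal.ofReal ((ψ s)^2 * |s - t| ^ r) ∂μT ∂μT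
        ≤ ∫⁻ s, ENNReal.ofReal ((ψ s)^2) * ENNReal.ofReal C ∂μT := by
          apply lintegral_mono_ae
          filter_upwards [ae_restrict_mem measurableSet_Ioc] with s hs
          exact step s hs
      _ = (∫⁻ s, ENNReal.ofReal ((ψ s)^2) ∂μT) * ENNReal.ofReal C := by
          have hm2 : Measurable fun u : ℝ => ENNReal.ofReal ((ψ u)^2) :=
            ENNReal.measurable_ofReal.comp (hmeas.pow_const 2)
          rw [lintegral_mul_const _ hm2]
      _ = ENNReal.ofReal I * ENNReal.ofReal C := by rw [hψlint]
  -- the double lintegral of the pointwise product is at most ofReal I * ofReal C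
  have hL : ∫⁻ t, ∫⁻ s, ENNReal.ofReal (|ψ s| * |ψ t| * |s - t| ^ r) ∂μT ∂μT ≤
      ENNReal.ofReal I * ENNReal.ofReal C := by
    rw [← ENNReal.mul_le_mul_iff_right (a := 2) two_ne_zero ENNReal.ofNat_ne_top]
    have hinner_m : Measurable fun t =>
        ∫⁻ s, ENNReal.ofReal (|ψ s| * |ψ t| * |s - t| ^ r) ∂μT :=
      Measurable.lintegral_prod_right hFm
    rw [← lintegral_const_mul _ hinner_m]
    have e : ∀ t, (2 : ℝ≥0∞) * ∫⁻ s, ENNReal.ofReal (|ψ s| * |ψ t| * |s - t| ^ r) ∂μT =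
        ∫⁻ s, 2 * ENNReal.ofReal (|ψ s| * |ψ t| * |s - t| ^ r) ∂μT := by
      intro t
      have hm : Measurable fun s : ℝ => ENNReal.ofReal (|ψ s| * |ψ t| * |s - t| ^ r) :=
        ENNReal.measurable_ofReal.comp ((mψ.mul measurable_const).mul
          ((meas_absrpow r).comp (measurable_id.sub measurable_const)))
      rw [lintegral_const_mul _ hm]
    simp only [e]
    have key : ∀ t s, (2:ℝ≥0∞) * ENNReal.ofReal (|ψ s| * |ψ t| * |s - t| ^ r) ≤
        ENNReal.ofReal ((ψ s)^2 * |s - t| ^ r) + ENNReal.ofReal ((ψ t)^2 * |s - t| ^ r) := by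
      intro t s
      have h2 : (2:ℝ≥0∞) = ENNReal.ofReal 2 := by norm_num
      rw [h2, ← ENNReal.ofReal_mul (by norm_num : (0:ℝ) ≤ 2)]
      refine le_trans (ENNReal.ofReal_le_ofReal ?_) (ENNReal.ofReal_add_le)
      have hK : 0 ≤ |s - t| ^ r := Real.rpow_nonneg (abs_nonneg _) _
      nlinarith [sq_nonneg (|ψ s| - |ψ t|), sq_abs (ψ s), sq_abs (ψ t), hg0 t s]
    calc ∫⁻ t, ∫⁻ s, 2 * ENNReal.ofReal (|ψ s| * |ψ t| * |s - t| ^ r) ∂μT ∂μT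
        ≤ ∫⁻ t, ∫⁻ s, (ENNReal.ofReal ((ψ s)^2 * |s - t| ^ r) +
            ENNReal.ofReal ((ψ t)^2 * |s - t| ^ r)) ∂μT ∂μT := by
          apply lintegral_mono; intro t; apply lintegral_mono; intro s; exact key t s
      _ = (∫⁻ t, ∫⁻ s, ENNReal.ofReal ((ψ s)^2 * |s - t| ^ r) ∂μT ∂μT) +
          ∫⁻ t, ∫⁻ s, ENNReal.ofReal ((ψ t)^2 * |s - t| ^ r) ∂μT ∂μT := by
          have e2 : ∀ t, ∫⁻ s, (ENNReal.ofReal ((ψ s)^2 * |s - t| ^ r) +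
              ENNReal.ofReal ((ψ t)^2 * |s - t| ^ r)) ∂μT =
              (∫⁻ s, ENNReal.ofReal ((ψ s)^2 * |s - t| ^ r) ∂μT) +
              ∫⁻ s, ENNReal.ofReal ((ψ t)^2 * |s - t| ^ r) ∂μT := by
            intro t
            have hm : Measurable fun s : ℝ => ENNReal.ofReal ((ψ s)^2 * |s - t| ^ r) :=
              ENNReal.measurable_ofReal.comp ((hmeas.pow_const 2).mul
                ((meas_absrpow r).comp (measurable_id.sub measurable_const)))
            exact lintegral_add_left hm _
          simp only [e2]
          have hm : Measurable fun t : ℝ =>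
              ∫⁻ s, ENNReal.ofReal ((ψ s)^2 * |s - t| ^ r) ∂μT :=
            Measurable.lintegral_prod_right hT1m
          exact lintegral_add_left hm _
      _ ≤ ENNReal.ofReal I * ENNReal.ofReal C + ENNReal.ofReal I * ENNReal.ofReal C :=
          add_le_add hTerm1 hTerm2
      _ = 2 * (ENNReal.ofReal I * ENNReal.ofReal C) := by ring
  -- convert the real double integral
  have hA : (∫ t in Set.Ioc (0:ℝ) T, ∫ s in Set.Ioc (0:ℝ) T,
      |ψ s| * |ψ t| * |s - t| ^ r) ≤ C * I := by
    have hinner_nonneg : ∀ t, 0 ≤ ∫ s in Set.Ioc (0:ℝ) T, |ψ s| * |ψ t| * |s - t| ^ r :=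
      fun t => setIntegral_nonneg measurableSet_Ioc (fun s _ => hg0 t s)
    have hinner_meas : AEStronglyMeasurable
        (fun t => ∫ s in Set.Ioc (0:ℝ) T, |ψ s| * |ψ t| * |s - t| ^ r) μT :=
      (hgm.stronglyMeasurable.integral_prod_right).aestronglyMeasurable
    rw [integral_eq_lintegral_of_nonneg_ae (ae_of_all _ hinner_nonneg) hinner_meas]
    apply ENNReal.toReal_le_of_le_ofReal (mul_nonneg hC0 hI0)
    have pt : ∀ t, ENNReal.ofReal (∫ s in Set.Ioc (0:ℝ) T, |ψ s| * |ψ t| * |s - t| ^ r) ≤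
        ∫⁻ s, ENNReal.ofReal (|ψ s| * |ψ t| * |s - t| ^ r) ∂μT := by
      intro t
      have hm : Measurable fun s : ℝ => |ψ s| * |ψ t| * |s - t| ^ r :=
        (mψ.mul measurable_const).mul
          ((meas_absrpow r).comp (measurable_id.sub measurable_const))
      rw [integral_eq_lintegral_of_nonneg_ae (ae_of_all _ (fun s => hg0 t s))
        hm.aestronglyMeasurable]
      exact ENNReal.ofReal_toReal_le
    calc ∫⁻ t, ENNReal.ofReal (∫ s in Set.Ioc (0:ℝ) T,
          |ψ s| * |ψ t| * |s - t| ^ r) ∂μT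
        ≤ ∫⁻ t, ∫⁻ s, ENNReal.ofReal (|ψ s| * |ψ t| * |s - t| ^ r) ∂μT ∂μT :=
          lintegral_mono pt
      _ ≤ ENNReal.ofReal I * ENNReal.ofReal C := hL
      _ = ENNReal.ofReal (C * I) := by
          rw [← ENNReal.ofReal_mul hI0, mul_comm]
  -- conclude
  have hfinal : H * (2*H - 1) * (C * I) = 2 * H * T ^ (2*H - 1) * I := by
    have : r + 1 = 2*H - 1 := by rw [hrdef]; ring
    rw [hCdef, this]
    have hne : 2*H - 1 ≠ 0 := by linarith
    field_simp
    ring_nf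
    have hne' : -1 + H * 2 ≠ 0 := by contrapose! hne; linarith
    field_simp
    ring
  calc H * (2*H - 1) * ∫ t in Set.Ioc (0:ℝ) T, ∫ s in Set.Ioc (0:ℝ) T,
        |ψ s| * |ψ t| * |s - t| ^ (2*H - 2)
      ≤ H * (2*H - 1) * (C * I) := by
        apply mul_le_mul_of_nonneg_left hA
        nlinarith
    _ = 2 * H * T ^ (2*H - 1) * I := hfinal
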